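/- arXiv:2401.02592 — 3 statements merged into one kernel-verified Lean document; each statement's English description precedes it below -/
import Mathlib

section
/- Let A1, A2 be real r1×r2 matrices and B1, B2 be real r2×r3 matrices. With A = [A1; A2], B = [B1; B2], and A ⊗̄ B = [A1B1; A2B1; A1B2; A2B2], the spectral norms satisfy ‖A ⊗̄ B‖ ≤ ‖A‖ · ‖B‖. -/
open Matrix

/-- Spectral (operator) norm of a real matrix. -/
noncomputable def specNorm {m n : Type*} [Fintype m] [Fintype n] [DecidableEq n]
    (A : Matrix m n ℝ) : ℝ :=
  ‖LinearMap.toContinuousLinearMap (Matrix.toEuclideanLin A)‖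

/-- The block Kronecker-type product A ⊗̄ B = [A1B1; A2B1; A1B2; A2B2]. -/
noncomputable def obar {r1 r2 r3 : ℕ}
    (A1 A2 : Matrix (Fin r1) (Fin r2) ℝ) (B1 B2 : Matrix (Fin r2) (Fin r3) ℝ) :
    Matrix ((Fin r1 ⊕ Fin r1) ⊕ (Fin r1 ⊕ Fin r1)) (Fin r3) ℝ :=
  Matrix.fromRows (Matrix.fromRows (A1 * B1) (A2 * B1))
    (Matrix.fromRows (A1 * B2) (A2 * B2))

lemma le_specNorm {m n : Type*} [Fintype m] [Fintype n] [DecidableEq n]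
    (A : Matrix m n ℝ) (x : EuclideanSpace ℝ n) :
    ‖Matrix.toEuclideanLin A x‖ ≤ specNorm A * ‖x‖ :=
  (LinearMap.toContinuousLinearMap (Matrix.toEuclideanLin A)).le_opNorm x

lemma toEuclideanLin_mul' {m n p : Type*} [Fintype m] [Fintype n] [Fintype p]
    [DecidableEq n] [DecidableEq p]
    (M : Matrix m n ℝ) (N : Matrix n p ℝ) (x : EuclideanSpace ℝ p) :
    Matrix.toEuclideanLin (M * N) x = Matrix.toEuclideanLin M (Matrix.toEuclideanLin N x) := by
  simp [Matrix.toEuclideanLin_apply, Matrix.mulVec_mulVec]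

lemma norm_sq_fromRows {m₁ m₂ n : Type*} [Fintype m₁] [Fintype m₂] [Fintype n]
    [DecidableEq n] (M : Matrix m₁ n ℝ) (N : Matrix m₂ n ℝ) (x : EuclideanSpace ℝ n) :
    ‖Matrix.toEuclideanLin (Matrix.fromRows M N) x‖ ^ 2 =
      ‖Matrix.toEuclideanLin M x‖ ^ 2 + ‖Matrix.toEuclideanLin N x‖ ^ 2 := by
  rw [EuclideanSpace.norm_eq, EuclideanSpace.norm_eq, EuclideanSpace.norm_eq,
    Real.sq_sqrt (Finset.sum_nonneg fun i _ => sq_nonneg _),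
    Real.sq_sqrt (Finset.sum_nonneg fun i _ => sq_nonneg _),
    Real.sq_sqrt (Finset.sum_nonneg fun i _ => sq_nonneg _), Fintype.sum_sum_type]
  congr 1

/-- ‖A ⊗̄ B‖ ≤ ‖A‖ ⬝ ‖B‖ (spectral norms). -/
theorem stmt_1 {r1 r2 r3 : ℕ}
    (A1 A2 : Matrix (Fin r1) (Fin r2) ℝ) (B1 B2 : Matrix (Fin r2) (Fin r3) ℝ) :
    specNorm (obar A1 A2 B1 B2) ≤
      specNorm (Matrix.fromRows A1 A2) * specNorm (Matrix.fromRows B1 B2) := by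
  set A := Matrix.fromRows A1 A2 with hA
  set B := Matrix.fromRows B1 B2 with hB
  have hobar : obar A1 A2 B1 B2 = Matrix.fromRows (A * B1) (A * B2) := by
    rw [hA, Matrix.fromRows_mul, Matrix.fromRows_mul]; rfl
  have hAn : (0:ℝ) ≤ specNorm A := norm_nonneg _
  have hBn : (0:ℝ) ≤ specNorm B := norm_nonneg _
  refine ContinuousLinearMap.opNorm_le_bound _ (mul_nonneg hAn hBn) fun x => ?_
  have key : ‖Matrix.toEuclideanLin (obar A1 A2 B1 B2) x‖ ^ 2 ≤
      (specNorm A * specNorm B * ‖x‖) ^ 2 := by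
    rw [hobar, norm_sq_fromRows, toEuclideanLin_mul', toEuclideanLin_mul']
    have h1 : ‖Matrix.toEuclideanLin A (Matrix.toEuclideanLin B1 x)‖ ^ 2 ≤
        specNorm A ^ 2 * ‖Matrix.toEuclideanLin B1 x‖ ^ 2 := by
      rw [← mul_pow]
      exact pow_le_pow_left₀ (norm_nonneg _) (le_specNorm A _) 2
    have h2 : ‖Matrix.toEuclideanLin A (Matrix.toEuclideanLin B2 x)‖ ^ 2 ≤
        specNorm A ^ 2 * ‖Matrix.toEuclideanLin B2 x‖ ^ 2 := by
      rw [← mul_pow]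
      exact pow_le_pow_left₀ (norm_nonneg _) (le_specNorm A _) 2
    have hBsum : ‖Matrix.toEuclideanLin B1 x‖ ^ 2 + ‖Matrix.toEuclideanLin B2 x‖ ^ 2 =
        ‖Matrix.toEuclideanLin B x‖ ^ 2 := (norm_sq_fromRows B1 B2 x).symm
    calc ‖Matrix.toEuclideanLin A (Matrix.toEuclideanLin B1 x)‖ ^ 2 +
          ‖Matrix.toEuclideanLin A (Matrix.toEuclideanLin B2 x)‖ ^ 2
        ≤ specNorm A ^ 2 * (‖Matrix.toEuclideanLin B1 x‖ ^ 2 +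
            ‖Matrix.toEuclideanLin B2 x‖ ^ 2) := by rw [mul_add]; exact add_le_add h1 h2
      _ = specNorm A ^ 2 * ‖Matrix.toEuclideanLin B x‖ ^ 2 := by rw [hBsum]
      _ ≤ specNorm A ^ 2 * (specNorm B * ‖x‖) ^ 2 := by
          apply mul_le_mul_of_nonneg_left _ (sq_nonneg _)
          exact pow_le_pow_left₀ (norm_nonneg _) (le_specNorm B x) 2
      _ = (specNorm A * specNorm B * ‖x‖) ^ 2 := by ring
  calc ‖Matrix.toEuclideanLin (obar A1 A2 B1 B2) x‖
      = Real.sqrt (‖Matrix.toEuclideanLin (obar A1 A2 B1 B2) x‖ ^ 2) :=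
        (Real.sqrt_sq (norm_nonneg _)).symm
    _ ≤ Real.sqrt ((specNorm A * specNorm B * ‖x‖) ^ 2) := Real.sqrt_le_sqrt key
    _ = specNorm A * specNorm B * ‖x‖ :=
        Real.sqrt_sq (mul_nonneg (mul_nonneg hAn hBn) (norm_nonneg _))
end

section
/- For any real matrices A_i, A*_i ∈ R^{r_{i-1}×r_i}, i = 1, ..., N, the following second-order expansion identity holds: A*_1 ⋯ A*_N − A_1 ⋯ A_N + Σ_{i=1}^{N} A_1 ⋯ A_{i-1} (A_i − A*_i) A_{i+1} ⋯ A_N = Σ_{i=1}^{N-1} Σ_{j=i+1}^{N} A_1 ⋯ A_{i-1} (A_i − A*_i) A*_{i+1} ⋯ A*_{j-1} (A_j − A*_j) A_{j+1} ⋯ A_N. -/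
open Matrix

/-- Product of the chain of matrices `A i * A (i+1) * ⋯ * A (j-1)`, a matrix of size
`r i × r j`. For `i = j` it is the identity; for meaningless ranges (`i > j`) it is junk. -/
noncomputable def seg (r : ℕ → ℕ) (A : ∀ i, Matrix (Fin (r i)) (Fin (r (i + 1))) ℝ)
    (i : ℕ) : (j : ℕ) → Matrix (Fin (r i)) (Fin (r j)) ℝ
  | 0 => if h : i = 0 then by subst h; exact 1 else 0
  | (j + 1) => if h : i = j + 1 then by subst h; exact 1 else seg r A i j * A j

lemma seg_self (r : ℕ → ℕ) (A : ∀ i, Matrix (Fin (r i)) (Fin (r (i + 1))) ℝ) (i : ℕ) :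
    seg r A i i = 1 := by
  cases i <;> simp [seg]

lemma seg_succ (r : ℕ → ℕ) (A : ∀ i, Matrix (Fin (r i)) (Fin (r (i + 1))) ℝ) (i j : ℕ)
    (h : i ≠ j + 1) : seg r A i (j + 1) = seg r A i j * A j := by
  simp [seg, h]

lemma seg_telescope (r : ℕ → ℕ) (A A' : ∀ i, Matrix (Fin (r i)) (Fin (r (i + 1))) ℝ) (N : ℕ) :
    seg r A 0 N - seg r A' 0 N =
      ∑ i ∈ Finset.range N, seg r A 0 i * (A i - A' i) * seg r A' (i + 1) N := by
  induction N with
  | zero => simp [seg]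
  | succ N ih =>
    rw [Finset.sum_range_succ, seg_succ r A 0 N (by omega), seg_succ r A' 0 N (by omega),
      seg_self, Matrix.mul_one]
    have h1 : ∑ i ∈ Finset.range N, seg r A 0 i * (A i - A' i) * seg r A' (i + 1) (N + 1)
        = (∑ i ∈ Finset.range N, seg r A 0 i * (A i - A' i) * seg r A' (i + 1) N) * A' N := by
      rw [Matrix.sum_mul]
      refine Finset.sum_congr rfl fun i hi => ?_
      simp only [Finset.mem_range] at hi
      rw [seg_succ r A' (i + 1) N (by omega)]; simp only [Matrix.mul_assoc]
    rw [h1, ← ih]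
    simp only [Matrix.sub_mul, Matrix.mul_sub]
    abel

/-- Second-order expansion identity:
`A*_1 ⋯ A*_N − A_1 ⋯ A_N + Σ_i A_1 ⋯ A_{i-1}(A_i − A*_i)A_{i+1} ⋯ A_N
  = Σ_{i<j} A_1 ⋯ A_{i-1}(A_i − A*_i)A*_{i+1} ⋯ A*_{j-1}(A_j − A*_j)A_{j+1} ⋯ A_N`. -/
theorem stmt_5 (r : ℕ → ℕ) (A A' : ∀ i, Matrix (Fin (r i)) (Fin (r (i + 1))) ℝ) (N : ℕ) :
    seg r A' 0 N - seg r A 0 N +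
        ∑ i ∈ Finset.range N, seg r A 0 i * (A i - A' i) * seg r A (i + 1) N =
      ∑ i ∈ Finset.range N, ∑ j ∈ Finset.Ico (i + 1) N,
        seg r A 0 i * (A i - A' i) * seg r A' (i + 1) j * (A j - A' j) *
          seg r A (j + 1) N := by
  induction N with
  | zero => simp [seg]
  | succ N ih =>
    rw [Finset.sum_range_succ, Finset.sum_range_succ (f := fun i => ∑ j ∈ Finset.Ico (i + 1) (N + 1),
        seg r A 0 i * (A i - A' i) * seg r A' (i + 1) j * (A j - A' j) * seg r A (j + 1) (N + 1)),
      Finset.Ico_self, Finset.sum_empty, add_zero,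
      seg_succ r A 0 N (by omega), seg_succ r A' 0 N (by omega),
      seg_self, Matrix.mul_one]
    have h1 : ∑ i ∈ Finset.range N, seg r A 0 i * (A i - A' i) * seg r A (i + 1) (N + 1)
        = (∑ i ∈ Finset.range N, seg r A 0 i * (A i - A' i) * seg r A (i + 1) N) * A N := by
      rw [Matrix.sum_mul]
      refine Finset.sum_congr rfl fun i hi => ?_
      simp only [Finset.mem_range] at hi
      rw [seg_succ r A (i + 1) N (by omega)]; simp only [Matrix.mul_assoc]
    have h2 : ∑ i ∈ Finset.range N, ∑ j ∈ Finset.Ico (i + 1) (N + 1),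
          seg r A 0 i * (A i - A' i) * seg r A' (i + 1) j * (A j - A' j) * seg r A (j + 1) (N + 1)
        = (∑ i ∈ Finset.range N, ∑ j ∈ Finset.Ico (i + 1) N,
            seg r A 0 i * (A i - A' i) * seg r A' (i + 1) j * (A j - A' j) * seg r A (j + 1) N) * A N
          + (∑ i ∈ Finset.range N, seg r A 0 i * (A i - A' i) * seg r A' (i + 1) N) * (A N - A' N) := by
      rw [Matrix.sum_mul, Matrix.sum_mul, ← Finset.sum_add_distrib]
      refine Finset.sum_congr rfl fun i hi => ?_
      simp only [Finset.mem_range] at hi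
      rw [Finset.sum_Ico_succ_top (by omega : i + 1 ≤ N), seg_self, Matrix.mul_one, Matrix.sum_mul]
      congr 1
      refine Finset.sum_congr rfl fun j hj => ?_
      simp only [Finset.mem_Ico] at hj
      rw [seg_succ r A (j + 1) N (by omega)]; simp only [Matrix.mul_assoc]
    rw [h1, h2, ← seg_telescope r A A' N, ← ih]
    simp only [Matrix.sub_mul, Matrix.mul_sub, Matrix.add_mul]
    abel
end

section
/- Let X ∈ St(n,r) (i.e., XᵀX = I_r), let ξ be in the tangent space of the Stiefel manifold at X (ξᵀX + Xᵀξ = 0), and set X⁺ = X + ξ. Then the polar-retraction point Retr_X(X⁺) = X⁺((X⁺)ᵀX⁺)^{-1/2} satisfies ‖Retr_X(X⁺) − X̄‖_F ≤ ‖X⁺ − X̄‖_F for every X̄ ∈ St(n,r). -/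
open Matrix

/-- Frobenius norm of a real matrix. -/
noncomputable def frobNorm {m n : Type*} [Fintype m] [Fintype n]
    (A : Matrix m n ℝ) : ℝ :=
  Real.sqrt (∑ i, ∑ j, (A i j) ^ 2)

/-- The square root of a positive semidefinite matrix (Mathlib's former `Matrix.PosSemidef.sqrt`). -/
noncomputable def Matrix.PosSemidef.sqrt {n 𝕜 : Type*} [Fintype n] [DecidableEq n] [RCLike 𝕜]
    [PartialOrder 𝕜] {A : Matrix n n 𝕜} (hA : A.PosSemidef) : Matrix n n 𝕜 :=
  (hA.1.eigenvectorUnitary : Matrix n n 𝕜) * diagonal ((↑) ∘ (√·) ∘ hA.1.eigenvalues) *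
    (star hA.1.eigenvectorUnitary : Matrix n n 𝕜)

lemma Matrix.PosSemidef.posSemidef_sqrt {r : ℕ} {A : Matrix (Fin r) (Fin r) ℝ}
    (hA : A.PosSemidef) : hA.sqrt.PosSemidef := by
  unfold Matrix.PosSemidef.sqrt
  have hd : (diagonal ((RCLike.ofReal : ℝ → ℝ) ∘ (√·) ∘ hA.1.eigenvalues) : Matrix (Fin r) (Fin r) ℝ).PosSemidef :=
    Matrix.posSemidef_diagonal_iff.mpr fun j => by simp [Real.sqrt_nonneg]
  simpa [Matrix.star_eq_conjTranspose] using
    hd.mul_mul_conjTranspose_same (hA.1.eigenvectorUnitary : Matrix (Fin r) (Fin r) ℝ)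

lemma Matrix.PosSemidef.sqrt_mul_self {r : ℕ} {A : Matrix (Fin r) (Fin r) ℝ}
    (hA : A.PosSemidef) : hA.sqrt * hA.sqrt = A := by
  set U : Matrix (Fin r) (Fin r) ℝ := (hA.1.eigenvectorUnitary : Matrix (Fin r) (Fin r) ℝ) with hUdef
  have hU : star U * U = 1 := Unitary.coe_star_mul_self _
  have hspec : A = U * diagonal (RCLike.ofReal ∘ hA.1.eigenvalues) * star U := by
    conv_lhs => rw [hA.1.spectral_theorem]
    simp [Unitary.conjStarAlgAut_apply, hUdef]
  unfold Matrix.PosSemidef.sqrt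
  rw [← hUdef]
  set D : Matrix (Fin r) (Fin r) ℝ := diagonal ((RCLike.ofReal : ℝ → ℝ) ∘ (√·) ∘ hA.1.eigenvalues) with hD
  rw [show U * D * star U * (U * D * star U) = U * (D * (star U * U) * D) * star U by
    simp only [Matrix.mul_assoc]]
  rw [hU, Matrix.mul_one, hD, diagonal_mul_diagonal]
  conv_rhs => rw [hspec]
  congr 2
  congr 1
  funext i
  simp [Real.mul_self_sqrt (hA.eigenvalues_nonneg i)]

section aux

lemma frob_sq_eq_trace {m n : Type*} [Fintype m] [Fintype n] (A : Matrix m n ℝ) :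
    ∑ i, ∑ j, (A i j) ^ 2 = (Aᵀ * A).trace := by
  rw [Matrix.trace]
  simp only [Matrix.diag, Matrix.mul_apply, Matrix.transpose_apply, sq]
  exact Finset.sum_comm

lemma trace_transpose_mul_self_nonneg {m n : Type*} [Fintype m] [Fintype n]
    (A : Matrix m n ℝ) : 0 ≤ (Aᵀ * A).trace := by
  rw [← frob_sq_eq_trace]
  exact Finset.sum_nonneg fun i _ => Finset.sum_nonneg fun j _ => sq_nonneg _

lemma trace_CS {m n : Type*} [Fintype m] [Fintype n] (A B : Matrix m n ℝ) :
    (Aᵀ * B).trace ^ 2 ≤ (Aᵀ * A).trace * (Bᵀ * B).trace := by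
  have h1 : (Aᵀ * B).trace = ∑ p : m × n, A p.1 p.2 * B p.1 p.2 := by
    rw [Matrix.trace, Fintype.sum_prod_type]
    simp only [Matrix.diag, Matrix.mul_apply, Matrix.transpose_apply]
    exact Finset.sum_comm
  have h2 : (Aᵀ * A).trace = ∑ p : m × n, (A p.1 p.2) ^ 2 := by
    rw [← frob_sq_eq_trace, Fintype.sum_prod_type]
  have h3 : (Bᵀ * B).trace = ∑ p : m × n, (B p.1 p.2) ^ 2 := by
    rw [← frob_sq_eq_trace, Fintype.sum_prod_type]
  rw [h1, h2, h3]
  exact Finset.sum_mul_sq_le_sq_mul_sq _ _ _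

lemma trace_transpose_mul_comm {m n : Type*} [Fintype m] [Fintype n]
    (A B : Matrix m n ℝ) : (Aᵀ * B).trace = (Bᵀ * A).trace := by
  rw [← Matrix.trace_transpose (Bᵀ * A), Matrix.transpose_mul, Matrix.transpose_transpose]

lemma trace_expand_sub {m n : Type*} [Fintype m] [Fintype n] (A B : Matrix m n ℝ) :
    ((A - B)ᵀ * (A - B)).trace
      = (Aᵀ * A).trace - 2 * (Bᵀ * A).trace + (Bᵀ * B).trace := by
  rw [Matrix.transpose_sub, Matrix.sub_mul, Matrix.mul_sub, Matrix.mul_sub,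
    Matrix.trace_sub, Matrix.trace_sub, Matrix.trace_sub,
    trace_transpose_mul_comm A B]
  ring

lemma eig_ge_one {r : ℕ} {M : Matrix (Fin r) (Fin r) ℝ} (hM : M.PosSemidef)
    (h1 : (M - 1).PosSemidef) (i : Fin r) : 1 ≤ hM.1.eigenvalues i := by
  set v : Fin r → ℝ := ⇑(hM.1.eigenvectorBasis i) with hv
  have hvv : v ⬝ᵥ v = 1 := by
    have hn : ‖hM.1.eigenvectorBasis i‖ = 1 := hM.1.eigenvectorBasis.orthonormal.1 i
    have := EuclideanSpace.norm_eq (hM.1.eigenvectorBasis i)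
    rw [this] at hn
    have h2 : ∑ j, ‖hM.1.eigenvectorBasis i j‖ ^ 2 = 1 := by
      rwa [Real.sqrt_eq_one] at hn
    simpa [dotProduct, Real.norm_eq_abs, sq_abs, mul_self_eq_mul_self_iff, sq] using h2
  have hMv : M *ᵥ v = hM.1.eigenvalues i • v := hM.1.mulVec_eigenvectorBasis i
  have h0 := h1.dotProduct_mulVec_nonneg v
  rw [sub_mulVec, one_mulVec, hMv] at h0
  have : (0:ℝ) ≤ hM.1.eigenvalues i * (v ⬝ᵥ v) - v ⬝ᵥ v := by
    simpa [dotProduct_sub, dotProduct_smul, smul_eq_mul, star_trivial] using h0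
  rw [hvv] at this
  linarith

lemma sqrt_sub_one_psd {r : ℕ} {M : Matrix (Fin r) (Fin r) ℝ} (hM : M.PosSemidef)
    (h1 : (M - 1).PosSemidef) : (hM.sqrt - 1).PosSemidef := by
  set U : Matrix (Fin r) (Fin r) ℝ := (hM.1.eigenvectorUnitary : Matrix (Fin r) (Fin r) ℝ) with hUdef
  have hU : U * star U = 1 := Matrix.mem_unitaryGroup_iff.mp (hM.1.eigenvectorUnitary).2
  have hsq : hM.sqrt = U * diagonal (Real.sqrt ∘ hM.1.eigenvalues) * star U := by
    rw [Matrix.PosSemidef.sqrt]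
    rfl
  have key : hM.sqrt - 1 = U * diagonal (fun j => Real.sqrt (hM.1.eigenvalues j) - 1) * star U := by
    have : diagonal (fun j => Real.sqrt (hM.1.eigenvalues j) - 1)
        = diagonal (Real.sqrt ∘ hM.1.eigenvalues) - 1 := by
      rw [← diagonal_one, diagonal_sub]; rfl
    rw [this, Matrix.mul_sub, Matrix.sub_mul, Matrix.mul_one, hU, hsq]
  rw [key]
  have hd : (diagonal (fun j => Real.sqrt (hM.1.eigenvalues j) - 1)).PosSemidef := by
    refine Matrix.posSemidef_diagonal_iff.mpr fun j => ?_
    have := eig_ge_one hM h1 j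
    have : 1 ≤ Real.sqrt (hM.1.eigenvalues j) := Real.one_le_sqrt.mpr this
    linarith
  simpa [Matrix.star_eq_conjTranspose] using hd.mul_mul_conjTranspose_same U

end aux

/-- Nonexpansiveness of the polar retraction: for `X ∈ St(n,r)`, `ξ` tangent at `X`,
`X⁺ = X + ξ`, and `Retr_X(X⁺) = X⁺((X⁺)ᵀX⁺)^{-1/2}`, we have
`‖Retr_X(X⁺) − X̄‖_F ≤ ‖X⁺ − X̄‖_F` for every `X̄ ∈ St(n,r)`. -/
theorem stmt_12 {n r : ℕ} (X ξ : Matrix (Fin n) (Fin r) ℝ)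
    (hX : Xᵀ * X = (1 : Matrix (Fin r) (Fin r) ℝ))
    (hξ : ξᵀ * X + Xᵀ * ξ = 0)
    (hM : ((X + ξ)ᵀ * (X + ξ)).PosSemidef)
    (Xbar : Matrix (Fin n) (Fin r) ℝ)
    (hXbar : Xbarᵀ * Xbar = (1 : Matrix (Fin r) (Fin r) ℝ)) :
    frobNorm ((X + ξ) * (hM.sqrt)⁻¹ - Xbar) ≤ frobNorm ((X + ξ) - Xbar) := by
  set Y : Matrix (Fin n) (Fin r) ℝ := X + ξ with hY
  -- Y^T Y = 1 + ξ^T ξ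
  have hMeq : Yᵀ * Y = 1 + ξᵀ * ξ := by
    have hXξ : Xᵀ * ξ = -(ξᵀ * X) := by
      rw [eq_neg_iff_add_eq_zero]
      rw [add_comm] at hξ
      exact hξ
    rw [hY, Matrix.transpose_add, Matrix.add_mul, Matrix.mul_add, Matrix.mul_add, hX, hXξ]
    abel
  have hξξ : (ξᵀ * ξ).PosSemidef := by
    simpa [Matrix.conjTranspose_eq_transpose_of_trivial] using Matrix.posSemidef_conjTranspose_mul_self ξ
  have hMpd : (Yᵀ * Y).PosDef := by
    rw [hMeq]
    exact Matrix.PosDef.add_posSemidef Matrix.PosDef.one hξξ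
  have hMsub : (Yᵀ * Y - 1).PosSemidef := by
    rw [hMeq]
    simpa using hξξ
  set S : Matrix (Fin r) (Fin r) ℝ := hM.sqrt with hSdef
  have hSpsd : S.PosSemidef := hM.posSemidef_sqrt
  have hSh : Sᵀ = S := hSpsd.1
  have hSS : S * S = Yᵀ * Y := hM.sqrt_mul_self
  have hdet : IsUnit S.det := by
    have h : S.det * S.det = (Yᵀ * Y).det := by rw [← Matrix.det_mul, hSS]
    have hpos : 0 < (Yᵀ * Y).det := hMpd.det_pos
    have : S.det ≠ 0 := by
      intro h0
      rw [h0, mul_zero] at h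
      exact hpos.ne h
    exact this.isUnit
  have hS1 : S⁻¹ * S = 1 := Matrix.nonsing_inv_mul _ hdet
  have hS2 : S * S⁻¹ = 1 := Matrix.mul_nonsing_inv _ hdet
  have hSinvT : (S⁻¹)ᵀ = S⁻¹ := by rw [Matrix.transpose_nonsing_inv, hSh]
  set P : Matrix (Fin n) (Fin r) ℝ := Y * S⁻¹ with hPdef
  have hPP : Pᵀ * P = 1 := by
    rw [hPdef, Matrix.transpose_mul, hSinvT]
    have h1 : Yᵀ * (Y * S⁻¹) = S * (S * S⁻¹) := by
      rw [← Matrix.mul_assoc, ← hSS, Matrix.mul_assoc]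
    rw [Matrix.mul_assoc, h1, hS2, Matrix.mul_one, hS1]
  have hYPS : Y = P * S := by
    rw [hPdef, Matrix.mul_assoc, hS1, Matrix.mul_one]
  -- T = S - 1 is PSD
  set T : Matrix (Fin r) (Fin r) ℝ := S - 1 with hTdef
  have hT : T.PosSemidef := sqrt_sub_one_psd hM hMsub
  set R : Matrix (Fin r) (Fin r) ℝ := hT.sqrt with hRdef
  have hRpsd : R.PosSemidef := hT.posSemidef_sqrt
  have hRh : Rᵀ = R := hRpsd.1
  have hRR : R * R = T := hT.sqrt_mul_self
  -- key trace bound : trace (Xbarᵀ P T) ≤ trace T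
  have htrT : 0 ≤ T.trace := by
    rw [← hRR]
    calc (0:ℝ) ≤ (Rᵀ * R).trace := trace_transpose_mul_self_nonneg R
    _ = (R * R).trace := by rw [hRh]
  have hXbarR : ((Xbar * R)ᵀ * (Xbar * R)).trace = T.trace := by
    rw [Matrix.transpose_mul, hRh, Matrix.mul_assoc, ← Matrix.mul_assoc Xbarᵀ, hXbar,
      Matrix.one_mul, hRR]
  have hPR : ((P * R)ᵀ * (P * R)).trace = T.trace := by
    rw [Matrix.transpose_mul, hRh, Matrix.mul_assoc, ← Matrix.mul_assoc Pᵀ, hPP,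
      Matrix.one_mul, hRR]
  have hkey : (Xbarᵀ * P * T).trace ≤ T.trace := by
    have heq : (Xbarᵀ * P * T).trace = ((Xbar * R)ᵀ * (P * R)).trace := by
      rw [← hRR, Matrix.transpose_mul, hRh]
      rw [show Xbarᵀ * P * (R * R) = (Xbarᵀ * P * R) * R from by
        simp only [Matrix.mul_assoc]]
      rw [Matrix.trace_mul_comm (Xbarᵀ * P * R) R]
      simp only [Matrix.mul_assoc]
    have hcs := trace_CS (Xbar * R) (P * R)
    rw [hXbarR, hPR] at hcs
    rw [heq]
    calc ((Xbar * R)ᵀ * (P * R)).trace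
        ≤ |((Xbar * R)ᵀ * (P * R)).trace| := le_abs_self _
      _ = Real.sqrt (((Xbar * R)ᵀ * (P * R)).trace ^ 2) := (Real.sqrt_sq_eq_abs _).symm
      _ ≤ Real.sqrt (T.trace * T.trace) := Real.sqrt_le_sqrt (by nlinarith [hcs])
      _ = T.trace := Real.sqrt_mul_self htrT
  -- reduce goal to traces
  rw [frobNorm, frobNorm]
  apply Real.sqrt_le_sqrt
  rw [frob_sq_eq_trace, frob_sq_eq_trace]
  rw [trace_expand_sub, trace_expand_sub, hPP, hXbar]
  have hYY : (Yᵀ * Y).trace = (T * T).trace + 2 * T.trace + (1 : Matrix (Fin r) (Fin r) ℝ).trace := by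
    have : S = T + 1 := by rw [hTdef]; abel
    rw [← hSS, this, Matrix.add_mul, Matrix.mul_add, Matrix.mul_add, Matrix.trace_add,
      Matrix.trace_add, Matrix.trace_add, Matrix.mul_one, Matrix.one_mul, Matrix.one_mul]
    ring
  have hTT : 0 ≤ (T * T).trace := by
    have hTt : Tᵀ = T := hT.1
    calc (0:ℝ) ≤ (Tᵀ * T).trace := trace_transpose_mul_self_nonneg T
    _ = (T * T).trace := by rw [hTt]
  have hsplit : (Xbarᵀ * Y).trace = (Xbarᵀ * P).trace + (Xbarᵀ * P * T).trace := by
    rw [hTdef, Matrix.mul_sub, Matrix.mul_one, Matrix.trace_sub]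
    rw [Matrix.mul_assoc, ← hYPS]
    ring
  rw [hYY, hsplit]
  linarith [hkey]
end
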